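/- Let Q be an infinite subgroup of Houghton's group H_n. Then there is no injective eventually-translation map α ∈ 𝓜 with q ∘ α = α for all q ∈ Q; that is, the fixed-point set 𝓜^Q is empty. -/

import Mathlib

/-- `f : ℕ × Fin n → ℕ × Fin n` is eventually a translation with translation
vector `m : Fin n → ℤ`: on each ray `ℕ × {x}`, for all sufficiently large `i`,
`f` sends `(i, x)` to `(i + m x, x)`. -/
def EvTrans (n : ℕ) (f : ℕ × Fin n → ℕ × Fin n) (m : Fin n → ℤ) : Prop :=
  ∀ x : Fin n, ∃ z : ℕ, ∀ i : ℕ, z ≤ i →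
    (f (i, x)).2 = x ∧ ((f (i, x)).1 : ℤ) = (i : ℤ) + m x

/-- Houghton's group `H_n`: the subgroup of the symmetric group on
`S = ℕ × Fin n` consisting of the permutations that are eventually
translations on each ray. -/
def Houghton (n : ℕ) : Subgroup (Equiv.Perm (ℕ × Fin n)) where
  carrier := {f : Equiv.Perm (ℕ × Fin n) | ∃ m : Fin n → ℤ, EvTrans n (⇑f) m}
  one_mem' := ⟨0, fun x => ⟨0, fun i _ => by simp⟩⟩
  mul_mem' := by
    rintro a b ⟨ma, hA⟩ ⟨mb, hB⟩
    refine ⟨ma + mb, fun x => ?_⟩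
    obtain ⟨za, hza⟩ := hA x
    obtain ⟨zb, hzb⟩ := hB x
    refine ⟨max zb ((za : ℤ) - mb x).toNat, fun i hi => ?_⟩
    have hib : zb ≤ i := le_trans (le_max_left _ _) hi
    obtain ⟨h2, h1⟩ := hzb i hib
    have hbx : (⇑b) (i, x) = ((b (i, x)).1, x) := Prod.ext_iff.mpr ⟨rfl, h2⟩
    have hk : za ≤ (b (i, x)).1 := by
      have h3 : ((za : ℤ) - mb x) ≤ (i : ℤ) := by
        calc ((za : ℤ) - mb x) ≤ (((za : ℤ) - mb x).toNat : ℤ) := Int.self_le_toNat _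
          _ ≤ (i : ℤ) := by exact_mod_cast le_trans (le_max_right _ _) hi
      have h4 : (za : ℤ) ≤ ((b (i, x)).1 : ℤ) := by rw [h1]; linarith
      exact_mod_cast h4
    obtain ⟨h4, h5⟩ := hza (b (i, x)).1 hk
    constructor
    · show ((a * b) (i, x)).2 = x
      rw [Equiv.Perm.mul_apply, hbx]
      exact h4
    · show (((a * b) (i, x)).1 : ℤ) = (i : ℤ) + (ma + mb) x
      rw [Equiv.Perm.mul_apply, hbx, h5, h1, Pi.add_apply]
      ring
  inv_mem' := by
    rintro a ⟨m, hm⟩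
    refine ⟨-m, fun x => ?_⟩
    obtain ⟨z, hz⟩ := hm x
    refine ⟨((z : ℤ) + m x).toNat, fun i hi => ?_⟩
    have h1 : (z : ℤ) + m x ≤ (i : ℤ) :=
      le_trans (Int.self_le_toNat _) (by exact_mod_cast hi)
    have h0 : (0 : ℤ) ≤ (i : ℤ) - m x := by
      have hz0 : (0 : ℤ) ≤ (z : ℤ) := Int.natCast_nonneg z
      linarith
    set j := ((i : ℤ) - m x).toNat with hjdef
    have hj' : (j : ℤ) = (i : ℤ) - m x := Int.toNat_of_nonneg h0
    have hjz : z ≤ j := by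
      have : (z : ℤ) ≤ (j : ℤ) := by rw [hj']; linarith
      exact_mod_cast this
    obtain ⟨h2, h3⟩ := hz j hjz
    have hfst : (a (j, x)).1 = i := by
      have : ((a (j, x)).1 : ℤ) = (i : ℤ) := by rw [h3, hj']; ring
      exact_mod_cast this
    have hfix : (⇑a) (j, x) = (i, x) := Prod.ext_iff.mpr ⟨hfst, h2⟩
    have hinv : (⇑a⁻¹) (i, x) = (j, x) := by
      rw [← hfix]
      exact Equiv.symm_apply_apply a (j, x)
    constructor
    · rw [hinv]
    · rw [hinv]
      show (j : ℤ) = (i : ℤ) + (-m) x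
      rw [hj', Pi.neg_apply]
      ring

/-- The monoid `𝓜` of injective maps `S → S` that are eventually
translations. -/
def HMonoid (n : ℕ) : Set ((ℕ × Fin n) → (ℕ × Fin n)) :=
  {α | Function.Injective α ∧ ∃ m : Fin n → ℤ, EvTrans n α m}

/-- If `Q` is an infinite subgroup of Houghton's group
`H_n`, then there is no injective eventually-translation map `α ∈ 𝓜` with
`q ∘ α = α` for all `q ∈ Q`; i.e. the fixed-point set `𝓜^Q` is empty. -/
theorem houghton_monoid_fixed_points_empty_of_infinite (n : ℕ) (hn : 1 ≤ n)
    (Q : Subgroup (Equiv.Perm (ℕ × Fin n))) (hQ : Q ≤ Houghton n)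
    (hinf : Infinite Q) :
    ¬ ∃ α ∈ HMonoid n, ∀ q ∈ Q, ⇑q ∘ α = α := by
  rintro ⟨α, ⟨hinj, m, hev⟩, hfix⟩
  choose z hz using hev
  set N : ℕ := Finset.univ.sup (fun x : Fin n => (((z x : ℤ) + m x).toNat + 1)) with hNdef
  have hrange : ∀ p : ℕ × Fin n, N ≤ p.1 → p ∈ Set.range α := by
    rintro ⟨j, x⟩ hj
    have hb : ((z x : ℤ) + m x).toNat + 1 ≤ N :=
      Finset.le_sup (f := fun x : Fin n => (((z x : ℤ) + m x).toNat + 1)) (Finset.mem_univ x)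
    have hb2 : (z x : ℤ) + m x < (N : ℤ) := by
      calc (z x : ℤ) + m x ≤ ((((z x : ℤ) + m x).toNat : ℕ) : ℤ) := Int.self_le_toNat _
        _ < (N : ℤ) := by exact_mod_cast Nat.lt_of_lt_of_le (Nat.lt_succ_self _) hb
    have hjz : (z x : ℤ) + m x ≤ (j : ℤ) := le_trans (le_of_lt hb2) (by exact_mod_cast hj)
    have h0 : (0 : ℤ) ≤ (j : ℤ) - m x := by
      have : (0 : ℤ) ≤ (z x : ℤ) := Int.natCast_nonneg _
      linarith
    set i := ((j : ℤ) - m x).toNat with hidef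
    have hi' : (i : ℤ) = (j : ℤ) - m x := Int.toNat_of_nonneg h0
    have hzi : z x ≤ i := by
      have : (z x : ℤ) ≤ (i : ℤ) := by rw [hi']; linarith
      exact_mod_cast this
    obtain ⟨h2, h1⟩ := hz x i hzi
    refine ⟨(i, x), ?_⟩
    have hfst : (α (i, x)).1 = j := by
      have : ((α (i, x)).1 : ℤ) = (j : ℤ) := by rw [h1, hi']; ring
      exact_mod_cast this
    exact Prod.ext hfst h2
  have hfin : (Set.range α)ᶜ.Finite := by
    apply Set.Finite.subset ((Set.finite_Iio N).prod (Set.finite_univ (α := Fin n)))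
    intro p hp
    refine Set.mem_prod.mpr ⟨?_, Set.mem_univ _⟩
    by_contra hc
    exact hp (hrange p (le_of_not_gt hc))
  haveI := hfin.to_subtype
  have hq_fix : ∀ q : Q, ∀ s : ℕ × Fin n, ∀ t, α t = s → (q : Equiv.Perm (ℕ × Fin n)) s = s := by
    intro q s t ht
    rw [← ht]
    exact congrFun (hfix q q.2) t
  have key : ∀ (q : Q) (p : ℕ × Fin n), p ∈ (Set.range α)ᶜ →
      (q : Equiv.Perm (ℕ × Fin n)) p ∈ (Set.range α)ᶜ := by
    rintro q p hp ⟨t, ht⟩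
    apply hp
    have h1 : (q : Equiv.Perm (ℕ × Fin n)) (α t) = α t := hq_fix q (α t) t rfl
    have h2 : (q : Equiv.Perm (ℕ × Fin n)) (α t) = (q : Equiv.Perm (ℕ × Fin n)) p := by
      rw [h1]; exact ht
    exact ⟨t, (q : Equiv.Perm (ℕ × Fin n)).injective h2⟩
  let φ : Q → (↥((Set.range α)ᶜ) → ↥((Set.range α)ᶜ)) :=
    fun q p => ⟨(q : Equiv.Perm (ℕ × Fin n)) p.1, key q p.1 p.2⟩
  have hφ : Function.Injective φ := by
    intro q1 q2 h
    apply Subtype.ext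
    apply Equiv.ext
    intro s
    by_cases hs : s ∈ Set.range α
    · obtain ⟨t, ht⟩ := hs
      rw [hq_fix q1 s t ht, hq_fix q2 s t ht]
    · have := congrFun h ⟨s, hs⟩
      exact Subtype.ext_iff.mp this
  haveI : Finite Q := Finite.of_injective φ hφ
  exact @not_finite Q hinf this
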